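/- For every integer m ≥ 3, the graph G_{4m+2} is a 3-γ_t-critical graph; moreover it has maximum degree Δ(G_{4m+2}) = 4m − 1 and order 4m + 2 = Δ(G_{4m+2}) + 3. -/

import Mathlib

open SimpleGraph

/-- `S` is a total dominating set of `G`: every vertex of `G` has a neighbor in `S`. -/
def IsTDS {V : Type*} (G : SimpleGraph V) (S : Set V) : Prop :=
  ∀ v : V, ∃ u ∈ S, G.Adj v u

/-- The total domination number `γₜ(G)`: the minimum cardinality of a total dominating set. -/
noncomputable def gammaT {V : Type*} (G : SimpleGraph V) : ℕ :=
  sInf {n : ℕ | ∃ S : Set V, IsTDS G S ∧ S.ncard = n}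

/-- The degree of a vertex. -/
noncomputable def deg {V : Type*} (G : SimpleGraph V) (v : V) : ℕ :=
  (G.neighborSet v).ncard

/-- The maximum degree `Δ(G)`. -/
noncomputable def maxDeg {V : Type*} [Fintype V] (G : SimpleGraph V) : ℕ :=
  Finset.univ.sup fun v => deg G v

/-- The vertex-deleted graph `G − v`. -/
def delVert {V : Type*} (G : SimpleGraph V) (v : V) : SimpleGraph {u : V // u ≠ v} :=
  G.induce {u : V | u ≠ v}

/-- `G` is 3-γₜ-critical: `γₜ(G) = 3` and for every vertex `v` that is not adjacent to a
vertex of degree one, `γₜ(G − v) = 2`. -/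
def IsThreeGammaTCritical {V : Type*} (G : SimpleGraph V) : Prop :=
  gammaT G = 3 ∧
    ∀ v : V, (¬ ∃ u : V, G.Adj v u ∧ deg G u = 1) → gammaT (delVert G v) = 2

/-- Vertices of `G_{4m+2}`: `x, y, z`, `y₁,…,y_{2m−1}` and `z₁,…,z_{2m}`;
`Y i` stands for `y_{i+1}` and `Z i` for `z_{i+1}` (0-based `Fin` indices). -/
inductive V42 (m : ℕ) : Type
  | x : V42 m
  | y : V42 m
  | z : V42 m
  | Y : Fin (2 * m - 1) → V42 m
  | Z : Fin (2 * m) → V42 m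
  deriving DecidableEq, Fintype

/-- Base edge relation of `G_{4m+2}` (the paper's 1-based indices are shifted down by 1):
`x yᵢ`, `x zᵢ`, `y yᵢ`, `y z`, `z zᵢ`, `yᵢ y_{1+((i+m−2) mod (2m−1))}`,
`zᵢ zⱼ` for `i < j`, `j ≠ i + m`, and `yᵢ zⱼ` for `j ≠ i`, `j ≠ i + 1`. -/
def R42 (m : ℕ) : V42 m → V42 m → Prop
  | .x, .Y _ => True
  | .x, .Z _ => True
  | .y, .Y _ => True
  | .y, .z => True
  | .z, .Z _ => True
  | .Y i, .Y j => j.val = (i.val + m - 1) % (2 * m - 1)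
  | .Z i, .Z j => i.val < j.val ∧ j.val ≠ i.val + m
  | .Y i, .Z j => j.val ≠ i.val ∧ j.val ≠ i.val + 1
  | _, _ => False

/-- The graph `G_{4m+2}`. -/
def G42 (m : ℕ) : SimpleGraph (V42 m) := SimpleGraph.fromRel (R42 m)



namespace G42Aux

lemma mod_two_cases {a n : ℕ} (h : a < 2 * n) :
    a % n = if a < n then a else a - n := by
  split_ifs with h'
  · exact Nat.mod_eq_of_lt h'
  · rw [Nat.mod_eq_sub_mod (le_of_not_gt h'), Nat.mod_eq_of_lt (by omega)]

lemma YY_mod {m : ℕ} (hm : 3 ≤ m) {i j : ℕ} (hi : i < 2*m-1) (hj : j < 2*m-1) :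
    (j = (i + m - 1) % (2*m-1)) ↔ (j + 1 = i + m ∨ j + m = i) := by
  rw [mod_two_cases (by omega)]
  split_ifs <;> omega

variable {m : ℕ}

lemma adj_x_Y (i : Fin (2*m-1)) : (G42 m).Adj .x (.Y i) := by
  simp [G42, SimpleGraph.fromRel_adj, R42]

lemma adj_x_Z (i : Fin (2*m)) : (G42 m).Adj .x (.Z i) := by
  simp [G42, SimpleGraph.fromRel_adj, R42]

lemma adj_y_Y (i : Fin (2*m-1)) : (G42 m).Adj .y (.Y i) := by
  simp [G42, SimpleGraph.fromRel_adj, R42]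

lemma adj_y_z : (G42 m).Adj .y .z := by
  simp [G42, SimpleGraph.fromRel_adj, R42]

lemma adj_z_Z (i : Fin (2*m)) : (G42 m).Adj .z (.Z i) := by
  simp [G42, SimpleGraph.fromRel_adj, R42]

lemma not_adj_x_y : ¬ (G42 m).Adj .x .y := by
  simp [G42, SimpleGraph.fromRel_adj, R42]

lemma not_adj_x_z : ¬ (G42 m).Adj .x .z := by
  simp [G42, SimpleGraph.fromRel_adj, R42]

lemma not_adj_y_Z (i : Fin (2*m)) : ¬ (G42 m).Adj .y (.Z i) := by
  simp [G42, SimpleGraph.fromRel_adj, R42]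

lemma not_adj_z_Y (i : Fin (2*m-1)) : ¬ (G42 m).Adj .z (.Y i) := by
  simp [G42, SimpleGraph.fromRel_adj, R42]

lemma adj_Y_Y (hm : 3 ≤ m) (i j : Fin (2*m-1)) :
    (G42 m).Adj (.Y i) (.Y j) ↔
      (j.val + 1 = i.val + m ∨ j.val + m = i.val ∨ i.val + 1 = j.val + m ∨ i.val + m = j.val) := by
  have hi := i.isLt; have hj := j.isLt
  simp only [G42, SimpleGraph.fromRel_adj, R42, ne_eq, V42.Y.injEq, Fin.ext_iff]
  rw [YY_mod hm hi hj, YY_mod hm hj hi]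
  omega

lemma adj_Y_Z (i : Fin (2*m-1)) (j : Fin (2*m)) :
    (G42 m).Adj (.Y i) (.Z j) ↔ (j.val ≠ i.val ∧ j.val ≠ i.val + 1) := by
  simp [G42, SimpleGraph.fromRel_adj, R42]

lemma adj_Z_Y (j : Fin (2*m)) (i : Fin (2*m-1)) :
    (G42 m).Adj (.Z j) (.Y i) ↔ (j.val ≠ i.val ∧ j.val ≠ i.val + 1) := by
  rw [(G42 m).adj_comm]; exact adj_Y_Z i j

lemma adj_Z_Z (i j : Fin (2*m)) :
    (G42 m).Adj (.Z i) (.Z j) ↔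
      (i.val ≠ j.val ∧ j.val ≠ i.val + m ∧ i.val ≠ j.val + m) := by
  simp only [G42, SimpleGraph.fromRel_adj, R42, ne_eq, V42.Z.injEq, Fin.ext_iff]
  omega

end G42Aux

namespace G42Aux

variable {m : ℕ}

lemma gammaT_eq_two' {V : Type*} [Finite V] (G : SimpleGraph V)
    (h : ∃ S : Set V, IsTDS G S ∧ S.ncard = 2) : gammaT G = 2 := by
  obtain ⟨S, hS, h2⟩ := h
  have hmem : 2 ∈ {n : ℕ | ∃ S : Set V, IsTDS G S ∧ S.ncard = n} := ⟨S, hS, h2⟩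
  refine le_antisymm (Nat.sInf_le hmem) (le_csInf ⟨2, hmem⟩ ?_)
  rintro n ⟨S', hS', rfl⟩
  by_contra hlt
  push_neg at hlt
  obtain ⟨a, -⟩ := Set.nonempty_of_ncard_ne_zero (by omega : S.ncard ≠ 0)
  have : S'.ncard = 0 ∨ S'.ncard = 1 := by omega
  rcases this with h0 | h1
  · have hS'e : S' = ∅ := by rwa [Set.ncard_eq_zero (Set.toFinite S')] at h0
    obtain ⟨u, hu, -⟩ := hS' a
    rw [hS'e] at hu
    exact hu
  · obtain ⟨u, rfl⟩ := Set.ncard_eq_one.mp h1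
    obtain ⟨u', hu', hadj⟩ := hS' u
    rw [Set.mem_singleton_iff] at hu'
    subst hu'
    exact G.irrefl hadj

lemma gammaT_eq_three' {V : Type*} [Finite V] (G : SimpleGraph V)
    (h : ∃ S : Set V, IsTDS G S ∧ S.ncard = 3)
    (hno2 : ∀ a b : V, G.Adj a b → ∃ w, ¬ G.Adj w a ∧ ¬ G.Adj w b) : gammaT G = 3 := by
  obtain ⟨S, hS, h3⟩ := h
  have hmem : 3 ∈ {n : ℕ | ∃ S : Set V, IsTDS G S ∧ S.ncard = n} := ⟨S, hS, h3⟩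
  refine le_antisymm (Nat.sInf_le hmem) (le_csInf ⟨3, hmem⟩ ?_)
  rintro n ⟨S', hS', rfl⟩
  by_contra hlt
  push_neg at hlt
  obtain ⟨a0, -⟩ := Set.nonempty_of_ncard_ne_zero (by omega : S.ncard ≠ 0)
  have : S'.ncard = 0 ∨ S'.ncard = 1 ∨ S'.ncard = 2 := by omega
  rcases this with h0 | h1 | h2
  · have hS'e : S' = ∅ := by rwa [Set.ncard_eq_zero (Set.toFinite S')] at h0
    obtain ⟨u, hu, -⟩ := hS' a0
    rw [hS'e] at hu
    exact hu
  · obtain ⟨u, rfl⟩ := Set.ncard_eq_one.mp h1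
    obtain ⟨u', hu', hadj⟩ := hS' u
    rw [Set.mem_singleton_iff] at hu'
    subst hu'
    exact G.irrefl hadj
  · obtain ⟨a, b, hab, rfl⟩ := Set.ncard_eq_two.mp h2
    have hAB : G.Adj a b := by
      obtain ⟨u, hu, hadj⟩ := hS' a
      rcases hu with rfl | rfl
      · exact absurd hadj (G.irrefl)
      · exact hadj
    obtain ⟨w, hw1, hw2⟩ := hno2 a b hAB
    obtain ⟨u, hu, hadj⟩ := hS' w
    rcases hu with rfl | rfl
    · exact hw1 hadj
    · exact hw2 hadj

def vEquiv (m : ℕ) : V42 m ≃ (Fin (2*m-1) ⊕ Fin (2*m) ⊕ Unit ⊕ Unit ⊕ Unit) where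
  toFun v := match v with
    | .Y i => .inl i
    | .Z i => .inr (.inl i)
    | .x => .inr (.inr (.inl ()))
    | .y => .inr (.inr (.inr (.inl ())))
    | .z => .inr (.inr (.inr (.inr ())))
  invFun s := match s with
    | .inl i => .Y i
    | .inr (.inl i) => .Z i
    | .inr (.inr (.inl _)) => .x
    | .inr (.inr (.inr (.inl _))) => .y
    | .inr (.inr (.inr (.inr _))) => .z
  left_inv v := by cases v <;> rfl
  right_inv s := by rcases s with i | i | ⟨⟩ | ⟨⟩ | ⟨⟩ <;> rfl

lemma card_V42 (hm : 3 ≤ m) : Fintype.card (V42 m) = 4 * m + 2 := by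
  rw [Fintype.card_congr (vEquiv m)]
  simp only [Fintype.card_sum, Fintype.card_fin, Fintype.card_unit]
  omega

end G42Aux

namespace G42Aux

variable {m : ℕ}

lemma nbr_x (hm : 3 ≤ m) :
    (G42 m).neighborSet .x = Set.range (V42.Y : Fin (2*m-1) → V42 m) ∪ Set.range (V42.Z : Fin (2*m) → V42 m) := by
  ext u
  cases u with
  | x => simp [SimpleGraph.mem_neighborSet, (G42 m).irrefl]
  | y => simp [SimpleGraph.mem_neighborSet, not_adj_x_y]
  | z => simp [SimpleGraph.mem_neighborSet, not_adj_x_z]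
  | Y i => simp [SimpleGraph.mem_neighborSet, adj_x_Y]
  | Z i => simp [SimpleGraph.mem_neighborSet, adj_x_Z]

lemma ncard_range_Y : (Set.range (V42.Y : Fin (2*m-1) → V42 m)).ncard = 2*m-1 := by
  rw [← Set.image_univ, Set.ncard_image_of_injective _ (fun a b h => by injection h),
    Set.ncard_univ, Nat.card_eq_fintype_card, Fintype.card_fin]

lemma ncard_range_Z : (Set.range (V42.Z : Fin (2*m) → V42 m)).ncard = 2*m := by
  rw [← Set.image_univ, Set.ncard_image_of_injective _ (fun a b h => by injection h),
    Set.ncard_univ, Nat.card_eq_fintype_card, Fintype.card_fin]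

lemma deg_x (hm : 3 ≤ m) : deg (G42 m) .x = 4*m - 1 := by
  rw [deg, nbr_x hm, Set.ncard_union_eq ?disj (Set.toFinite _) (Set.toFinite _),
    ncard_range_Y, ncard_range_Z]
  · omega
  case disj =>
    rw [Set.disjoint_left]
    rintro _ ⟨i, rfl⟩ ⟨j, h⟩
    exact absurd h (by simp)

lemma deg_le_of_three (hm : 3 ≤ m) (v a b : V42 m)
    (hva : v ≠ a) (hvb : v ≠ b) (hab : a ≠ b)
    (hna : ¬ (G42 m).Adj v a) (hnb : ¬ (G42 m).Adj v b) :
    deg (G42 m) v ≤ 4*m - 1 := by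
  have hsub : ({v, a, b} : Set (V42 m)) ⊆ ((G42 m).neighborSet v)ᶜ := by
    rintro w (rfl | rfl | rfl)
    · simp [SimpleGraph.mem_neighborSet, (G42 m).irrefl]
    · simp [SimpleGraph.mem_neighborSet, hna]
    · simp [SimpleGraph.mem_neighborSet, hnb]
  have h3 : ({v, a, b} : Set (V42 m)).ncard = 3 := by
    rw [Set.ncard_insert_of_notMem (by simp [hva, hvb]) (Set.toFinite _),
      Set.ncard_insert_of_notMem (by simp [hab]) (Set.toFinite _), Set.ncard_singleton]
  have hle := Set.ncard_le_ncard hsub (Set.toFinite _)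
  have hcompl := Set.ncard_add_ncard_compl ((G42 m).neighborSet v)
  rw [Nat.card_eq_fintype_card, card_V42 hm] at hcompl
  rw [deg]
  omega

lemma deg_le (hm : 3 ≤ m) (v : V42 m) : deg (G42 m) v ≤ 4*m - 1 := by
  have h0 : (0 : ℕ) < 2*m := by omega
  have h0' : (0 : ℕ) < 2*m-1 := by omega
  cases v with
  | x =>
    exact deg_le_of_three hm _ .y .z (by simp) (by simp) (by simp) not_adj_x_y not_adj_x_z
  | y =>
    refine deg_le_of_three hm _ .x (.Z ⟨0, h0⟩) (by simp) (by simp) (by simp)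
      (fun h => not_adj_x_y h.symm) (not_adj_y_Z _)
  | z =>
    refine deg_le_of_three hm _ .x (.Y ⟨0, h0'⟩) (by simp) (by simp) (by simp)
      (fun h => not_adj_x_z h.symm) (not_adj_z_Y _)
  | Y i =>
    have hi := i.isLt
    refine deg_le_of_three hm _ (.Z ⟨i.val, by omega⟩) (.Z ⟨i.val+1, by omega⟩)
      (by simp) (by simp) (by simp [Fin.ext_iff]) ?_ ?_
    · rw [adj_Y_Z]; simp only [Fin.val_mk]; omega
    · rw [adj_Y_Z]; simp only [Fin.val_mk]; omega
  | Z i =>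
    have hi := i.isLt
    by_cases hiv : i.val < m
    · refine deg_le_of_three hm _ .y (.Z ⟨i.val + m, by omega⟩)
        (by simp) (by simp [Fin.ext_iff]; omega) (by simp) ?_ ?_
      · exact fun h => not_adj_y_Z _ h.symm
      · rw [adj_Z_Z]; simp only [Fin.val_mk]; omega
    · refine deg_le_of_three hm _ .y (.Z ⟨i.val - m, by omega⟩)
        (by simp) (by simp [Fin.ext_iff]; omega) (by simp) ?_ ?_
      · exact fun h => not_adj_y_Z _ h.symm
      · rw [adj_Z_Z]; simp only [Fin.val_mk]; omega

lemma maxDeg_eq (hm : 3 ≤ m) : maxDeg (G42 m) = 4*m - 1 := by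
  refine le_antisymm (Finset.sup_le fun v _ => deg_le hm v) ?_
  calc (4*m-1 : ℕ) = deg (G42 m) .x := (deg_x hm).symm
    _ ≤ _ := Finset.le_sup (Finset.mem_univ _)

end G42Aux

namespace G42Aux

variable {m : ℕ}

lemma wit_YZ (hm : 3 ≤ m) (i : Fin (2*m-1)) (j : Fin (2*m))
    (hadj : (G42 m).Adj (.Y i) (.Z j)) :
    ∃ w, ¬ (G42 m).Adj w (.Y i) ∧ ¬ (G42 m).Adj w (.Z j) := by
  rw [adj_Y_Z] at hadj
  have hi := i.isLt; have hj := j.isLt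
  by_cases h1 : j.val = i.val + m ∨ i.val = j.val + m
  · refine ⟨.Z ⟨i.val, by omega⟩, ?_, ?_⟩
    · rw [adj_Z_Y]; simp only [Fin.val_mk]; omega
    · rw [adj_Z_Z]; simp only [Fin.val_mk]; omega
  by_cases h2 : j.val = i.val + 1 + m ∨ i.val + 1 = j.val + m
  · refine ⟨.Z ⟨i.val + 1, by omega⟩, ?_, ?_⟩
    · rw [adj_Z_Y]; simp only [Fin.val_mk]; omega
    · rw [adj_Z_Z]; simp only [Fin.val_mk]; omega
  by_cases h3 : j.val + 1 ≤ 2*m-1 ∧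
      ¬ (j.val + 1 = i.val + m ∨ j.val + m = i.val ∨ i.val + 1 = j.val + m ∨ i.val + m = j.val)
  · refine ⟨.Y ⟨j.val, by omega⟩, ?_, ?_⟩
    · rw [adj_Y_Y hm]; simp only [Fin.val_mk]; omega
    · rw [adj_Y_Z]; simp only [Fin.val_mk]; omega
  · refine ⟨.Y ⟨j.val - 1, by omega⟩, ?_, ?_⟩
    · rw [adj_Y_Y hm]; simp only [Fin.val_mk]; omega
    · rw [adj_Y_Z]; simp only [Fin.val_mk]; omega

lemma no_dom_edge (hm : 3 ≤ m) (a b : V42 m) (hab : (G42 m).Adj a b) :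
    ∃ w, ¬ (G42 m).Adj w a ∧ ¬ (G42 m).Adj w b := by
  have hyx : ¬ (G42 m).Adj .y .x := fun h => not_adj_x_y h.symm
  have hzx : ¬ (G42 m).Adj .z .x := fun h => not_adj_x_z h.symm
  have hxy : ¬ (G42 m).Adj .x .y := not_adj_x_y
  have hxz : ¬ (G42 m).Adj .x .z := not_adj_x_z
  cases a with
  | x =>
    cases b with
    | x => exact absurd hab ((G42 m).irrefl)
    | y => exact absurd hab not_adj_x_y
    | z => exact absurd hab not_adj_x_z
    | Y i => -- witness z
      exact ⟨.z, hzx, not_adj_z_Y i⟩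
    | Z i => -- witness y
      exact ⟨.y, hyx, not_adj_y_Z i⟩
  | y =>
    cases b with
    | x => exact absurd hab hyx
    | y => exact absurd hab ((G42 m).irrefl)
    | z => exact ⟨.x, hxy, hxz⟩
    | Y i =>
      refine ⟨.Z ⟨i.val, by omega⟩, fun h => not_adj_y_Z _ h.symm, ?_⟩
      rw [adj_Z_Y]; simp only [Fin.val_mk]; omega
    | Z i => exact absurd hab (not_adj_y_Z i)
  | z =>
    cases b with
    | x => exact absurd hab hzx
    | y =>
      exact ⟨.x, hxz, hxy⟩
    | z => exact absurd hab ((G42 m).irrefl)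
    | Y i => exact absurd hab (not_adj_z_Y i)
    | Z j =>
      have hj := j.isLt
      by_cases hjv : j.val < 2*m-1
      · refine ⟨.Y ⟨j.val, by omega⟩, not_adj_z_Y _ ∘ SimpleGraph.Adj.symm, ?_⟩
        rw [(G42 m).adj_comm, adj_Z_Y]; simp only [Fin.val_mk]; omega
      · refine ⟨.Y ⟨j.val - 1, by omega⟩, not_adj_z_Y _ ∘ SimpleGraph.Adj.symm, ?_⟩
        rw [(G42 m).adj_comm, adj_Z_Y]; simp only [Fin.val_mk]; omega
  | Y i =>
    cases b with
    | x => exact ⟨.z, not_adj_z_Y i, hzx⟩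
    | y =>
      refine ⟨.Z ⟨i.val, by omega⟩, ?_, fun h => not_adj_y_Z _ h.symm⟩
      rw [adj_Z_Y]; simp only [Fin.val_mk]; omega
    | z => exact absurd hab (fun h => not_adj_z_Y i h.symm)
    | Y j => exact ⟨.z, not_adj_z_Y i, not_adj_z_Y j⟩
    | Z j =>
      exact wit_YZ hm i j hab
  | Z i =>
    cases b with
    | x => exact ⟨.y, not_adj_y_Z i, hyx⟩
    | y => exact absurd hab (fun h => not_adj_y_Z i h.symm)
    | z =>
      have hi := i.isLt
      by_cases hiv : i.val < 2*m-1
      · refine ⟨.Y ⟨i.val, by omega⟩, ?_, not_adj_z_Y _ ∘ SimpleGraph.Adj.symm⟩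
        rw [(G42 m).adj_comm, adj_Z_Y]; simp only [Fin.val_mk]; omega
      · refine ⟨.Y ⟨i.val - 1, by omega⟩, ?_, not_adj_z_Y _ ∘ SimpleGraph.Adj.symm⟩
        rw [(G42 m).adj_comm, adj_Z_Y]; simp only [Fin.val_mk]; omega
    | Y j =>
      obtain ⟨w, h1, h2⟩ := wit_YZ hm j i hab.symm
      exact ⟨w, h2, h1⟩
    | Z j => exact ⟨.y, not_adj_y_Z i, not_adj_y_Z j⟩

end G42Aux

namespace G42Aux

variable {m : ℕ}

lemma gamma3 (hm : 3 ≤ m) : gammaT (G42 m) = 3 := by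
  have h0 : (0:ℕ) < 2*m := by omega
  refine gammaT_eq_three' (G42 m) ⟨{V42.y, V42.z, V42.Z ⟨0, h0⟩}, ?_, ?_⟩ (no_dom_edge hm)
  · intro v
    cases v with
    | x => exact ⟨.Z ⟨0, h0⟩, by simp, adj_x_Z _⟩
    | y => exact ⟨.z, by simp, adj_y_z⟩
    | z => exact ⟨.y, by simp, adj_y_z.symm⟩
    | Y i => exact ⟨.y, by simp, (adj_y_Y i).symm⟩
    | Z i => exact ⟨.z, by simp, (adj_z_Z i).symm⟩
  · rw [Set.ncard_insert_of_notMem (by simp) (Set.toFinite _),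
      Set.ncard_insert_of_notMem (by simp) (Set.toFinite _), Set.ncard_singleton]

lemma delVert_adj {V : Type*} (G : SimpleGraph V) (d : V) (a b : {u : V // u ≠ d}) :
    (delVert G d).Adj a b ↔ G.Adj a.1 b.1 := Iff.rfl

lemma gammaT_del_eq_two (hm : 3 ≤ m) (d a b : V42 m) (had : a ≠ d) (hbd : b ≠ d)
    (hab : (G42 m).Adj a b)
    (hcov : ∀ w : V42 m, w ≠ d → (G42 m).Adj w a ∨ (G42 m).Adj w b) :
    gammaT (delVert (G42 m) d) = 2 := by
  refine gammaT_eq_two' _ ⟨{⟨a, had⟩, ⟨b, hbd⟩}, ?_, ?_⟩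
  · rintro ⟨w, hw⟩
    rcases hcov w hw with h | h
    · exact ⟨⟨a, had⟩, by simp, (delVert_adj _ _ _ _).mpr h⟩
    · exact ⟨⟨b, hbd⟩, by simp, (delVert_adj _ _ _ _).mpr h⟩
  · exact Set.ncard_pair (by simpa [Subtype.ext_iff] using hab.ne)

lemma fin_ne_of_val_ne {n : ℕ} {i j : Fin n} (h : i.val ≠ j.val) : i ≠ j :=
  fun he => h (he ▸ rfl)

lemma crit_del (hm : 3 ≤ m) (d : V42 m) : gammaT (delVert (G42 m) d) = 2 := by
  have h0 : (0:ℕ) < 2*m := by omega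
  have h2 : (2:ℕ) < 2*m := by omega
  cases d with
  | x =>
    refine gammaT_del_eq_two hm _ .y .z (by simp) (by simp) adj_y_z ?_
    intro w hw
    cases w with
    | x => exact absurd rfl hw
    | y => exact Or.inr adj_y_z
    | z => exact Or.inl adj_y_z.symm
    | Y i => exact Or.inl (adj_y_Y i).symm
    | Z i => exact Or.inr (adj_z_Z i).symm
  | y =>
    refine gammaT_del_eq_two hm _ (.Z ⟨0, h0⟩) (.Z ⟨2, h2⟩) (by simp) (by simp)
      (by rw [adj_Z_Z]; simp only [Fin.val_mk]; omega) ?_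
    intro w hw
    cases w with
    | x => exact Or.inl (adj_x_Z _)
    | y => exact absurd rfl hw
    | z => exact Or.inl (adj_z_Z _)
    | Y i =>
      have hi := i.isLt
      rcases eq_or_ne i.val 0 with h | h
      · right; rw [adj_Y_Z]; simp only [Fin.val_mk]; omega
      · left; rw [adj_Y_Z]; simp only [Fin.val_mk]; omega
    | Z i =>
      have hi := i.isLt
      by_cases h : i.val = 0 ∨ i.val = m
      · right; rw [adj_Z_Z]; simp only [Fin.val_mk]; omega
      · left; rw [adj_Z_Z]; simp only [Fin.val_mk]; omega
  | z =>
    have h0' : (0:ℕ) < 2*m-1 := by omega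
    refine gammaT_del_eq_two hm _ .x (.Y ⟨0, h0'⟩) (by simp) (by simp) (adj_x_Y _) ?_
    intro w hw
    cases w with
    | x => exact Or.inr (adj_x_Y _)
    | y => exact Or.inr (adj_y_Y _)
    | z => exact absurd rfl hw
    | Y i => exact Or.inl (adj_x_Y i).symm
    | Z i => exact Or.inl (adj_x_Z i).symm
  | Y i =>
    have hi := i.isLt
    have hYne : ∀ (l : Fin (2*m-1)), V42.Y l ≠ V42.Y i → l.val ≠ i.val := by
      intro l hl hv
      exact hl (congrArg V42.Y (Fin.ext hv))
    by_cases hc : i.val ≤ m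
    · refine gammaT_del_eq_two hm _ (.Y ⟨i.val + m - 2, by omega⟩) (.Z ⟨i.val, by omega⟩)
        (by simp [Fin.ext_iff]; omega) (by simp)
        (by rw [adj_Y_Z]; simp only [Fin.val_mk]; omega) ?_
      intro w hw
      cases w with
      | x => exact Or.inl (adj_x_Y _)
      | y => exact Or.inl (adj_y_Y _)
      | z => exact Or.inr (adj_z_Z _)
      | Y l =>
        have hl := l.isLt
        have hlv := hYne l hw
        rw [adj_Y_Y hm, adj_Y_Z]; simp only [Fin.val_mk]; omega
      | Z l =>
        have hl := l.isLt
        rw [adj_Z_Y, adj_Z_Z]; simp only [Fin.val_mk]; omega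
    · refine gammaT_del_eq_two hm _ (.Y ⟨i.val - m + 2, by omega⟩) (.Z ⟨i.val + 1, by omega⟩)
        (by simp [Fin.ext_iff]; omega) (by simp)
        (by rw [adj_Y_Z]; simp only [Fin.val_mk]; omega) ?_
      intro w hw
      cases w with
      | x => exact Or.inl (adj_x_Y _)
      | y => exact Or.inl (adj_y_Y _)
      | z => exact Or.inr (adj_z_Z _)
      | Y l =>
        have hl := l.isLt
        have hlv := hYne l hw
        rw [adj_Y_Y hm, adj_Y_Z]; simp only [Fin.val_mk]; omega
      | Z l =>
        have hl := l.isLt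
        rw [adj_Z_Y, adj_Z_Z]; simp only [Fin.val_mk]; omega
  | Z i =>
    have hi := i.isLt
    have hZne : ∀ (l : Fin (2*m)), V42.Z l ≠ V42.Z i → l.val ≠ i.val := by
      intro l hl hv
      exact hl (congrArg V42.Z (Fin.ext hv))
    by_cases hc1 : i.val < m
    · refine gammaT_del_eq_two hm _ (.Y ⟨i.val, by omega⟩) (.Z ⟨i.val + m, by omega⟩)
        (by simp) (by simp [Fin.ext_iff]; omega)
        (by rw [adj_Y_Z]; simp only [Fin.val_mk]; omega) ?_
      intro w hw
      cases w with
      | x => exact Or.inl (adj_x_Y _)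
      | y => exact Or.inl (adj_y_Y _)
      | z => exact Or.inr (adj_z_Z _)
      | Y l =>
        have hl := l.isLt
        rw [adj_Y_Y hm, adj_Y_Z]; simp only [Fin.val_mk]; omega
      | Z l =>
        have hl := l.isLt
        have hlv := hZne l hw
        rw [adj_Z_Y, adj_Z_Z]; simp only [Fin.val_mk]; omega
    · by_cases hc2 : i.val = m
      · refine gammaT_del_eq_two hm _ (.Y ⟨m, by omega⟩) (.Z ⟨0, h0⟩)
          (by simp) (by simp [Fin.ext_iff]; omega)
          (by rw [adj_Y_Z]; simp only [Fin.val_mk]; omega) ?_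
        intro w hw
        cases w with
        | x => exact Or.inl (adj_x_Y _)
        | y => exact Or.inl (adj_y_Y _)
        | z => exact Or.inr (adj_z_Z _)
        | Y l =>
          have hl := l.isLt
          rw [adj_Y_Y hm, adj_Y_Z]; simp only [Fin.val_mk]; omega
        | Z l =>
          have hl := l.isLt
          have hlv := hZne l hw
          rw [adj_Z_Y, adj_Z_Z]; simp only [Fin.val_mk]; omega
      · refine gammaT_del_eq_two hm _ (.Y ⟨i.val - 1, by omega⟩) (.Z ⟨i.val - m, by omega⟩)
          (by simp) (by simp [Fin.ext_iff]; omega)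
          (by rw [adj_Y_Z]; simp only [Fin.val_mk]; omega) ?_
        intro w hw
        cases w with
        | x => exact Or.inl (adj_x_Y _)
        | y => exact Or.inl (adj_y_Y _)
        | z => exact Or.inr (adj_z_Z _)
        | Y l =>
          have hl := l.isLt
          rw [adj_Y_Y hm, adj_Y_Z]; simp only [Fin.val_mk]; omega
        | Z l =>
          have hl := l.isLt
          have hlv := hZne l hw
          rw [adj_Z_Y, adj_Z_Z]; simp only [Fin.val_mk]; omega

end G42Aux


/-- Theorem 2.5: `G_{4m+2}` is a 3-γₜ-critical graph with `Δ = 4m − 1` and order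
`4m + 2 = Δ + 3`, for every `m ≥ 3`. -/
theorem G42_is_critical (m : ℕ) (hm : 3 ≤ m) :
    IsThreeGammaTCritical (G42 m) ∧ maxDeg (G42 m) = 4 * m - 1 ∧
      Fintype.card (V42 m) = 4 * m + 2 ∧ Fintype.card (V42 m) = maxDeg (G42 m) + 3 := by
  refine ⟨⟨G42Aux.gamma3 hm, fun v _ => G42Aux.crit_del hm v⟩, G42Aux.maxDeg_eq hm,
    G42Aux.card_V42 hm, ?_⟩
  rw [G42Aux.card_V42 hm, G42Aux.maxDeg_eq hm]
  omega
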